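/- Let q,t ≥ 2 be integers with q even and q ≤ t, and let 0 < ε < min{q/(2t), 1/2}. Let δ ∈ {0,1} with δ ≡ t (mod 2) and set t₂ = t−δ (the largest even integer ≤ t). Then: if t = q, the triple (q,t,ε) is a good triple if and only if 0 < ε < 1/(2(q−1)); and if q < t < 2q, the triple (q,t,ε) is a good triple if and only if 0 < ε < min{ q/(2t), q/t₂ − 1/2, 1/(2(q+1)) }. Moreover, if t ≥ q, q odd is impossible and t < 2q is necessary: if q is odd with t ≥ q, or if t ≥ 2q, then (q,t,ε) is not a good triple for any admissible ε. -/

import Mathlib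

/-- `(q,t,ε)` is a good triple. -/
def GoodTriple (q t : ℕ) (ε : ℝ) : Prop :=
  ∀ t' : ℕ, 2 ≤ t' → t' ≤ t →
    ∃ s : ℕ, 1 ≤ s ∧ s ≤ t' ∧
      (t' : ℝ) / 2 - (1 - 2 * ε) * (t' : ℝ) / (2 * (q : ℝ)) < (s : ℝ) ∧
      (s : ℝ) < (t' : ℝ) / 2 + 1 - (1 + 2 * ε) * (t' : ℝ) / (2 * (q : ℝ))


private lemma aux1 (a b c q : ℝ) (hq : 0 < q) :
    a / 2 - b / (2 * q) < c ↔ a * q - b < c * (2 * q) := by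
  rw [show a / 2 - b / (2 * q) = (a * q - b) / (2 * q) by field_simp,
    div_lt_iff₀ (by positivity)]

private lemma aux2 (a b c q : ℝ) (hq : 0 < q) :
    c < a / 2 + 1 - b / (2 * q) ↔ c * (2 * q) < a * q + 2 * q - b := by
  rw [show a / 2 + 1 - b / (2 * q) = (a * q + 2 * q - b) / (2 * q) by field_simp,
    lt_div_iff₀ (by positivity)]

set_option maxHeartbeats 4000000 in
theorem stmt8 (q t : ℕ) (hq : 2 ≤ q) (ht : 2 ≤ t) (hqt : q ≤ t)
    (ε : ℝ) (hε0 : 0 < ε) (hε : ε < min ((q : ℝ) / (2 * (t : ℝ))) (1 / 2))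
    (δ : ℕ) (hδ01 : δ = 0 ∨ δ = 1) (hδ : δ % 2 = t % 2) :
    (q % 2 = 0 → t = q →
      (GoodTriple q t ε ↔ (0 < ε ∧ ε < 1 / (2 * ((q : ℝ) - 1))))) ∧
    (q % 2 = 0 → q < t → t < 2 * q →
      (GoodTriple q t ε ↔ (0 < ε ∧ ε < min ((q : ℝ) / (2 * (t : ℝ)))
        (min ((q : ℝ) / ((t : ℝ) - (δ : ℝ)) - 1 / 2) (1 / (2 * ((q : ℝ) + 1))))))) ∧
    (q % 2 = 1 → ¬ GoodTriple q t ε) ∧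
    (2 * q ≤ t → ¬ GoodTriple q t ε) := by
  have part1 : q % 2 = 0 → t = q →
      (GoodTriple q t ε ↔ (0 < ε ∧ ε < 1 / (2 * ((q : ℝ) - 1)))) := by
    have hq0 : (0:ℝ) < q := by exact_mod_cast (by omega : 0 < q)
    have hε12 : ε < 1/2 := lt_of_lt_of_le hε (min_le_right _ _)
    intro heven hteq
    subst hteq
    constructor
    · intro hg
      refine ⟨hε0, ?_⟩
      rcases eq_or_lt_of_le hq with hq2 | hq4
      · rw [← hq2]; norm_num; linarith
      · obtain ⟨m, hm⟩ : ∃ m, t = 2*m+2 := ⟨t/2 - 1, by omega⟩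
        obtain ⟨s, hs1, hs2, hs3, hs4⟩ := hg (2*m+1) (by omega) (by omega)
        rw [aux1 _ _ _ _ hq0] at hs3
        rw [aux2 _ _ _ _ hq0] at hs4
        subst hm
        push_cast at hs3 hs4 ⊢
        have hms : m < s := by
          have : (m:ℝ) < s := by nlinarith
          exact_mod_cast this
        have hms' : (m:ℝ) + 1 ≤ s := by exact_mod_cast hms
        have hm0 : (0:ℝ) ≤ m := Nat.cast_nonneg m
        rw [lt_div_iff₀ (by linarith : (0:ℝ) < 2 * (2 * (m:ℝ) + 2 - 1))]
        nlinarith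
    · rintro ⟨-, hlt⟩ t' h2 hle
      have hq2R : (2:ℝ) ≤ t := by exact_mod_cast hq
      have hlt' : ε * (2 * ((t:ℝ) - 1)) < 1 :=
        (lt_div_iff₀ (by linarith : (0:ℝ) < 2 * ((t:ℝ) - 1))).mp hlt
      rcases Nat.even_or_odd t' with ⟨k, hk⟩ | ⟨k, hk⟩
      · have hk1 : (1:ℝ) ≤ k := by exact_mod_cast (by omega : 1 ≤ k)
        have hkq : 2 * (k:ℝ) ≤ t := by exact_mod_cast (by omega : 2 * k ≤ t)
        refine ⟨k, by omega, by omega, ?_, ?_⟩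
        · rw [aux1 _ _ _ _ hq0]
          have : (t':ℝ) = 2 * k := by exact_mod_cast (by omega : t' = 2 * k)
          rw [this]; nlinarith
        · rw [aux2 _ _ _ _ hq0]
          have : (t':ℝ) = 2 * k := by exact_mod_cast (by omega : t' = 2 * k)
          rw [this]; nlinarith [mul_pos (show (0:ℝ) < 1/2 - ε by linarith) (show (0:ℝ) < (k:ℝ) by linarith)]
      · have hkq : 2 * (k:ℝ) + 2 ≤ t := by exact_mod_cast (by omega : 2 * k + 2 ≤ t)
        have htk : (t':ℝ) = 2 * k + 1 := by exact_mod_cast hk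
        refine ⟨k + 1, by omega, by omega, ?_, ?_⟩
        · rw [aux1 _ _ _ _ hq0, htk]; push_cast; nlinarith
        · rw [aux2 _ _ _ _ hq0, htk]; push_cast
          nlinarith [mul_nonneg hε0.le (show (0:ℝ) ≤ (t:ℝ) - 1 - (2*k+1) by linarith)]
  have part2 : q % 2 = 0 → q < t → t < 2 * q →
      (GoodTriple q t ε ↔ (0 < ε ∧ ε < min ((q : ℝ) / (2 * (t : ℝ)))
        (min ((q : ℝ) / ((t : ℝ) - (δ : ℝ)) - 1 / 2) (1 / (2 * ((q : ℝ) + 1)))))) := by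
    have hq0 : (0:ℝ) < q := by exact_mod_cast (by omega : 0 < q)
    have hq2R : (2:ℝ) ≤ q := by exact_mod_cast hq
    have hε12 : ε < 1/2 := lt_of_lt_of_le hε (min_le_right _ _)
    have hεqt : ε < (q:ℝ) / (2 * t) := lt_of_lt_of_le hε (min_le_left _ _)
    intro heven hqlt htlt
    have hδt : δ ≤ t := by omega
    have hδR : ((t - δ : ℕ) : ℝ) = (t:ℝ) - δ := by
      push_cast [Nat.cast_sub hδt]; ring
    have htδ0 : (0:ℝ) < (t:ℝ) - δ := by
      rw [← hδR]; exact_mod_cast (by omega : 0 < t - δ)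
    constructor
    · intro hg
      refine ⟨hε0, lt_min hεqt (lt_min ?_ ?_)⟩
      · -- ε < q/(t-δ) - 1/2, use t' = t - δ = 2k
        obtain ⟨k, hk⟩ : ∃ k, t - δ = 2*k := ⟨(t-δ)/2, by omega⟩
        have hk1 : 1 ≤ k := by omega
        have hkq : k ≤ q - 1 := by omega
        obtain ⟨s, hs1, hs2, hs3, hs4⟩ := hg (2*k) (by omega) (by omega)
        rw [aux1 _ _ _ _ hq0] at hs3
        rw [aux2 _ _ _ _ hq0] at hs4
        push_cast at hs3 hs4
        have hk1R : (1:ℝ) ≤ k := by exact_mod_cast hk1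
        have hkqR : (k:ℝ) ≤ (q:ℝ) - 1 := by
          have : (k:ℝ) + 1 ≤ q := by exact_mod_cast (by omega : k + 1 ≤ q)
          linarith
        have hks : k ≤ s := by
          have h1 : (k:ℝ) - 1 < s := by nlinarith
          have : k < s + 1 := by exact_mod_cast (by linarith : (k:ℝ) < s + 1)
          omega
        have hksR : (k:ℝ) ≤ s := by exact_mod_cast hks
        have hkey : (1 + 2*ε) * k < q := by nlinarith
        have htδk : (t:ℝ) - δ = 2*k := by
          rw [← hδR]; exact_mod_cast hk
        rw [htδk, lt_sub_iff_add_lt, lt_div_iff₀ (by linarith : (0:ℝ) < 2*(k:ℝ))]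
        nlinarith
      · -- ε < 1/(2(q+1)), use t' = q+1
        obtain ⟨s, hs1, hs2, hs3, hs4⟩ := hg (q+1) (by omega) (by omega)
        rw [aux1 _ _ _ _ hq0] at hs3
        rw [aux2 _ _ _ _ hq0] at hs4
        push_cast at hs3 hs4
        obtain ⟨r, hr⟩ : ∃ r, q = 2*r := ⟨q/2, by omega⟩
        have hrR : (q:ℝ) = 2*r := by exact_mod_cast hr
        have hr1 : (1:ℝ) ≤ r := by exact_mod_cast (by omega : 1 ≤ r)
        have hεr : (0:ℝ) ≤ ε * r := mul_nonneg hε0.le (Nat.cast_nonneg r)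
        rw [hrR] at hs3 hs4
        have hr4 : (0:ℝ) ≤ 4 * (r:ℝ) := by linarith
        have hsr : s = r := by
          have hlow : ((r:ℝ) - 1) * (4*r) < s * (4*r) := by linarith [hs3, hεr, hr1, hε0.le]
          have hhigh : (s:ℝ) * (4*r) < ((r:ℝ) + 1) * (4*r) := by linarith [hs4, hεr, hε0.le]
          have hlow' : (r:ℝ) - 1 < s := lt_of_mul_lt_mul_right hlow hr4
          have hhigh' : (s:ℝ) < r + 1 := lt_of_mul_lt_mul_right hhigh hr4
          have h1 : r < s + 1 := by exact_mod_cast (by linarith : (r:ℝ) < s + 1)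
          have h2 : s < r + 1 := by exact_mod_cast hhigh'
          omega
        subst hsr
        rw [lt_div_iff₀ (by linarith : (0:ℝ) < 2*((q:ℝ)+1)), hrR]
        linarith [hs3, hεr]
    · rintro ⟨-, hlt⟩
      have h1 : ε < (q:ℝ) / ((t:ℝ) - δ) - 1/2 :=
        lt_of_lt_of_le hlt ((min_le_right _ _).trans (min_le_left _ _))
      have h2 : ε < 1 / (2*((q:ℝ)+1)) :=
        lt_of_lt_of_le hlt ((min_le_right _ _).trans (min_le_right _ _))
      have h1' : (ε + 1/2) * ((t:ℝ) - δ) < q := by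
        rw [lt_sub_iff_add_lt, lt_div_iff₀ htδ0] at h1
        linarith
      have h2' : ε * (2*((q:ℝ)+1)) < 1 := (lt_div_iff₀ (by linarith)).mp h2
      intro t' h2t hle
      rcases Nat.even_or_odd t' with ⟨k, hk⟩ | ⟨k, hk⟩
      · have hk1 : (1:ℝ) ≤ k := by exact_mod_cast (by omega : 1 ≤ k)
        have hktδ : 2*(k:ℝ) ≤ (t:ℝ) - δ := by
          rw [← hδR]; exact_mod_cast (by omega : 2*k ≤ t - δ)
        have htk : (t':ℝ) = 2 * k := by exact_mod_cast (by omega : t' = 2 * k)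
        refine ⟨k, by omega, by omega, ?_, ?_⟩
        · rw [aux1 _ _ _ _ hq0, htk]
          nlinarith [mul_pos (show (0:ℝ) < 1/2 - ε by linarith) (show (0:ℝ) < (k:ℝ) by linarith)]
        · rw [aux2 _ _ _ _ hq0, htk]
          nlinarith [mul_nonneg (show (0:ℝ) ≤ ε + 1/2 by linarith)
            (show (0:ℝ) ≤ (t:ℝ) - δ - 2*k by linarith)]
      · have htk : (t':ℝ) = 2 * k + 1 := by exact_mod_cast hk
        rcases Nat.lt_or_ge (2*k+1) q with hcase | hcase
        · -- t' < q, use s = k+1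
          have hkqR : 2*(k:ℝ) + 2 ≤ q := by exact_mod_cast (by omega : 2*k+2 ≤ q)
          refine ⟨k + 1, by omega, by omega, ?_, ?_⟩
          · rw [aux1 _ _ _ _ hq0, htk]; push_cast
            nlinarith [mul_nonneg (show (0:ℝ) ≤ 1 - 2*ε by linarith)
              (show (0:ℝ) ≤ 2*(k:ℝ)+1 by linarith)]
          · rw [aux2 _ _ _ _ hq0, htk]; push_cast
            nlinarith [mul_nonneg hε0.le (show (0:ℝ) ≤ (q:ℝ) - 1 - (2*(k:ℝ)+1) by linarith)]
        · -- t' > q, use s = k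
          have hgt : q + 1 ≤ 2*k+1 := by omega
          have hgtR : (q:ℝ) + 1 ≤ 2*(k:ℝ)+1 := by exact_mod_cast hgt
          have hupR : 2*(k:ℝ)+1 ≤ 2*(q:ℝ) - 1 := by
            have : 2*k+1+1 ≤ 2*q := by omega
            have h := this
            have : (2*(k:ℝ)+1)+1 ≤ 2*q := by exact_mod_cast this
            linarith
          refine ⟨k, by omega, by omega, ?_, ?_⟩
          · rw [aux1 _ _ _ _ hq0, htk]
            nlinarith [mul_nonneg (show (0:ℝ) ≤ 1 - 2*ε by linarith)
              (show (0:ℝ) ≤ (2*(k:ℝ)+1) - ((q:ℝ)+1) by linarith)]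
          · rw [aux2 _ _ _ _ hq0, htk]
            nlinarith [mul_nonneg hε0.le (show (0:ℝ) ≤ (2*(q:ℝ)-1) - (2*(k:ℝ)+1) by linarith)]
  have part34 : (q % 2 = 1 → ¬ GoodTriple q t ε) ∧ (2 * q ≤ t → ¬ GoodTriple q t ε) := by
    have hq0 : (0:ℝ) < q := by exact_mod_cast (by omega : 0 < q)
    constructor
    · intro hodd hg
      obtain ⟨k, hk⟩ : ∃ k, q = 2*k+1 := ⟨q/2, by omega⟩
      obtain ⟨s, hs1, hs2, hs3, hs4⟩ := hg q hq hqt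
      rw [aux1 _ _ _ _ hq0] at hs3
      rw [aux2 _ _ _ _ hq0] at hs4
      subst hk
      push_cast at hs3 hs4
      have hks : k < s := by
        have : (k:ℝ) < s := by nlinarith
        exact_mod_cast this
      have hks' : (k:ℝ) + 1 ≤ s := by exact_mod_cast hks
      nlinarith
    · intro h2q hg
      obtain ⟨s, hs1, hs2, hs3, hs4⟩ := hg (2*q) (by omega) h2q
      rw [aux1 _ _ _ _ hq0] at hs3
      rw [aux2 _ _ _ _ hq0] at hs4
      push_cast at hs3 hs4
      have hqs : q ≤ s := by
        have h : (q:ℝ) - 1 < s := by nlinarith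
        have : q < s + 1 := by exact_mod_cast (by linarith : (q:ℝ) < s + 1)
        omega
      have hqs' : (q:ℝ) ≤ s := by exact_mod_cast hqs
      nlinarith
  exact ⟨part1, part2, part34.1, part34.2⟩
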